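/- Let m ≥ 1 and let G be a finite simple graph with m edges and no isolated vertices such that h(G) ≥ h(G') for every finite simple graph G' with m edges. Then G is connected. -/

import Mathlib

open Finset

/-- `f x = x * log x` (note `Real.log 0 = 0`, so `f 0 = 0`). -/
noncomputable def f (x : ℝ) : ℝ := x * Real.log x

lemma gmono : StrictMono (fun k : ℕ => f (k + 1) - f k) := by
  apply strictMono_nat_of_lt_succ
  intro k
  have h := Real.strictConvexOn_mul_log.slope_strict_mono_adjacent
    (x := (k : ℝ)) (y := (k : ℝ) + 1) (z := (k : ℝ) + 2)
    (by simp [Set.mem_Ici]) (by simp [Set.mem_Ici]; positivity) (by linarith) (by linarith)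
  simp only [add_sub_cancel_left] at h
  have h2 : ((k : ℝ) + 2 - ((k : ℝ) + 1)) = 1 := by ring
  rw [h2, div_one, div_one] at h
  simp only [f]
  push_cast
  convert h using 2 <;> ring

/-- If `G` has `m ≥ 1` edges, no isolated vertices, and maximizes
`h(G) = ∑ v, f (deg v)` among all graphs with `m` edges, then `G` is connected. -/
theorem h_maximizer_is_connected {V : Type*} [Fintype V] (G : SimpleGraph V)
    [DecidableRel G.Adj] [Fintype G.edgeSet]
    (m : ℕ) (hm : 1 ≤ m) (hedges : G.edgeFinset.card = m)
    (hniso : ∀ v, 0 < G.degree v)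
    (hmax : ∀ (W : Type) [Fintype W] [DecidableEq W] (G' : SimpleGraph W)
      [DecidableRel G'.Adj], G'.edgeFinset.card = m →
        ∑ w, f (G'.degree w) ≤ ∑ v, f (G.degree v)) :
    G.Connected := by
  classical
  -- V is nonempty
  have hVne : Nonempty V := by
    by_contra hne
    rw [not_nonempty_iff] at hne
    have : G.edgeFinset = ∅ := by
      ext e
      induction e with
      | _ a b => exact (hne.false a).elim
    rw [this] at hedges
    simp at hedges
    omega
  rw [SimpleGraph.connected_iff]
  refine ⟨?_, hVne⟩
  by_contra hpre
  unfold SimpleGraph.Preconnected at hpre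
  push_neg at hpre
  obtain ⟨a, b, hab⟩ := hpre
  -- pick u of minimal degree
  obtain ⟨u, -, hu⟩ := Finset.exists_min_image Finset.univ (fun x => G.degree x) ⟨Classical.arbitrary V, Finset.mem_univ _⟩
  -- pick a neighbor v of u
  have hdu : 0 < G.degree u := hniso u
  rw [← SimpleGraph.card_neighborFinset_eq_degree, Finset.card_pos] at hdu
  obtain ⟨v, hv⟩ := hdu
  rw [SimpleGraph.mem_neighborFinset] at hv
  -- pick w not reachable from u
  have hw : ∃ w, ¬ G.Reachable u w := by
    by_cases h : G.Reachable u a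
    · exact ⟨b, fun h2 => hab (h.symm.trans h2)⟩
    · exact ⟨a, h⟩
  obtain ⟨w, hw⟩ := hw
  have huv : u ≠ v := hv.ne
  have hwu : w ≠ u := by rintro rfl; exact hw (SimpleGraph.Reachable.refl w)
  have hwv : w ≠ v := by rintro rfl; exact hw hv.reachable
  have hnadj_vw : ¬ G.Adj v w := fun h => hw (hv.reachable.trans h.reachable)
  have hvNw : v ∉ G.neighborFinset w := by
    rw [SimpleGraph.mem_neighborFinset]
    exact fun h => hnadj_vw h.symm
  -- construct G'
  set Gd : SimpleGraph V := G.deleteEdges {s(u, v)} with hGd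
  set G' : SimpleGraph V := Gd ⊔ SimpleGraph.edge v w with hG'
  haveI : DecidableRel Gd.Adj := fun x y =>
    decidable_of_iff (G.Adj x y ∧ ¬ s(x, y) = s(u, v)) (by rw [SimpleGraph.deleteEdges_adj]; simp)
  haveI : DecidableRel G'.Adj := fun x y => by
    rw [hG']; exact inferInstanceAs (Decidable (Gd.Adj x y ∨ (SimpleGraph.edge v w).Adj x y))
  have hadj : ∀ x y, G'.Adj x y ↔
      (G.Adj x y ∧ ¬ s(x, y) = s(u, v)) ∨ ((x = v ∧ y = w) ∨ (x = w ∧ y = v)) := by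
    intro x y
    rw [hG', SimpleGraph.sup_adj, hGd, SimpleGraph.deleteEdges_adj, SimpleGraph.edge_adj]
    constructor
    · rintro (⟨h1, h2⟩ | ⟨h1, -⟩)
      · exact Or.inl ⟨h1, by simpa using h2⟩
      · exact Or.inr h1
    · rintro (⟨h1, h2⟩ | h1)
      · exact Or.inl ⟨h1, by simpa using h2⟩
      · refine Or.inr ⟨h1, ?_⟩
        rcases h1 with ⟨rfl, rfl⟩ | ⟨rfl, rfl⟩
        · exact fun h => hwv h.symm
        · exact hwv
  -- edge count of G'
  have hnadj_d_vw : ¬ Gd.Adj v w := by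
    rw [hGd, SimpleGraph.deleteEdges_adj]; exact fun h => hnadj_vw h.1
  have hGd_edges : Gd.edgeFinset = G.edgeFinset.erase s(u, v) := by
    ext e
    rw [SimpleGraph.mem_edgeFinset, hGd, SimpleGraph.edgeSet_deleteEdges]
    simp [and_comm]
  have hmem_uv : s(u, v) ∈ G.edgeFinset := by
    rw [SimpleGraph.mem_edgeFinset, SimpleGraph.mem_edgeSet]; exact hv
  have hcard' : G'.edgeFinset.card = m := by
    show (Gd ⊔ SimpleGraph.edge v w).edgeFinset.card = m
    rw [SimpleGraph.card_edgeFinset_sup_edge _ hnadj_d_vw hwv.symm, hGd_edges,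
      Finset.card_erase_of_mem hmem_uv, hedges]
    omega
  -- degrees in G'
  have hdeg_u : G'.degree u = G.degree u - 1 := by
    have : G'.neighborFinset u = (G.neighborFinset u).erase v := by
      ext y
      rw [SimpleGraph.mem_neighborFinset, hadj, Finset.mem_erase,
        SimpleGraph.mem_neighborFinset, Sym2.eq_iff]
      constructor
      · rintro (⟨h1, h2⟩ | ⟨rfl, rfl⟩ | ⟨rfl, rfl⟩)
        · exact ⟨fun h => h2 (Or.inl ⟨rfl, h⟩), h1⟩
        · exact absurd rfl huv
        · exact absurd rfl hwu
      · rintro ⟨h1, h2⟩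
        exact Or.inl ⟨h2, by rintro (⟨-, rfl⟩ | ⟨rfl, -⟩) <;> [exact h1 rfl; exact huv rfl]⟩
    rw [SimpleGraph.degree, this, Finset.card_erase_of_mem (by rwa [SimpleGraph.mem_neighborFinset]),
      SimpleGraph.card_neighborFinset_eq_degree]
  have hdeg_w : G'.degree w = G.degree w + 1 := by
    have : G'.neighborFinset w = insert v (G.neighborFinset w) := by
      ext y
      rw [SimpleGraph.mem_neighborFinset, hadj, Finset.mem_insert,
        SimpleGraph.mem_neighborFinset, Sym2.eq_iff]
      constructor
      · rintro (⟨h1, -⟩ | ⟨rfl, rfl⟩ | ⟨-, rfl⟩)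
        · exact Or.inr h1
        · exact absurd rfl hwv
        · exact Or.inl rfl
      · rintro (rfl | h1)
        · exact Or.inr (Or.inr ⟨rfl, rfl⟩)
        · refine Or.inl ⟨h1, ?_⟩
          rintro (⟨rfl, -⟩ | ⟨rfl, -⟩)
          · exact hwu rfl
          · exact hwv rfl
    rw [SimpleGraph.degree, this, Finset.card_insert_of_notMem hvNw,
      SimpleGraph.card_neighborFinset_eq_degree]
  have hdeg_v : G'.degree v = G.degree v := by
    have heq : G'.neighborFinset v = insert w ((G.neighborFinset v).erase u) := by
      ext y
      rw [SimpleGraph.mem_neighborFinset, hadj, Finset.mem_insert, Finset.mem_erase,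
        SimpleGraph.mem_neighborFinset, Sym2.eq_iff]
      constructor
      · rintro (⟨h1, h2⟩ | ⟨-, rfl⟩ | ⟨rfl, rfl⟩)
        · exact Or.inr ⟨fun h => h2 (Or.inr ⟨rfl, h⟩), h1⟩
        · exact Or.inl rfl
        · exact absurd rfl (Ne.symm hwv)
      · rintro (rfl | ⟨h1, h2⟩)
        · exact Or.inr (Or.inl ⟨rfl, rfl⟩)
        · exact Or.inl ⟨h2, by rintro (⟨rfl, -⟩ | ⟨-, rfl⟩) <;> [exact huv rfl; exact h1 rfl]⟩
    have huNv : u ∈ G.neighborFinset v := by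
      rw [SimpleGraph.mem_neighborFinset]; exact hv.symm
    have hwNv : w ∉ (G.neighborFinset v).erase u := by
      intro h
      rw [Finset.mem_erase, SimpleGraph.mem_neighborFinset] at h
      exact hnadj_vw h.2
    rw [SimpleGraph.degree, heq, Finset.card_insert_of_notMem hwNv,
      Finset.card_erase_of_mem huNv, SimpleGraph.card_neighborFinset_eq_degree]
    have := hniso v
    omega
  have hdeg_other : ∀ x, x ≠ u → x ≠ v → x ≠ w → G'.degree x = G.degree x := by
    intro x hxu hxv hxw
    have : G'.neighborFinset x = G.neighborFinset x := by
      ext y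
      rw [SimpleGraph.mem_neighborFinset, hadj, SimpleGraph.mem_neighborFinset, Sym2.eq_iff]
      constructor
      · rintro (⟨h1, -⟩ | ⟨rfl, rfl⟩ | ⟨rfl, rfl⟩)
        · exact h1
        · exact absurd rfl hxv
        · exact absurd rfl hxw
      · intro h1
        exact Or.inl ⟨h1, by rintro (⟨rfl, -⟩ | ⟨rfl, -⟩) <;> [exact hxu rfl; exact hxv rfl]⟩
    rw [SimpleGraph.degree, this, SimpleGraph.card_neighborFinset_eq_degree]
  -- sum comparison
  have hsum : ∑ x, (f (G'.degree x) - f (G.degree x)) =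
      (f ((G.degree w : ℝ) + 1) - f (G.degree w)) + (f ((G.degree u : ℝ) - 1) - f (G.degree u)) := by
    rw [← Finset.sum_subset (Finset.subset_univ ({u, w} : Finset V))]
    · rw [Finset.sum_pair (fun h => hwu h.symm)]
      have h1 : ((G'.degree u : ℝ)) = (G.degree u : ℝ) - 1 := by
        rw [hdeg_u]
        have := hniso u
        push_cast [Nat.cast_sub (by omega : 1 ≤ G.degree u)]
        ring
      have h2 : ((G'.degree w : ℝ)) = (G.degree w : ℝ) + 1 := by
        rw [hdeg_w]; push_cast; ring
      rw [h1, h2]; ring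
    · intro x _ hx
      simp only [Finset.mem_insert, Finset.mem_singleton] at hx
      push_neg at hx
      by_cases hxv : x = v
      · subst hxv; rw [hdeg_v]; ring
      · rw [hdeg_other x hx.1 hxv hx.2]; ring
  have hgt : ∑ x, f (G.degree x) < ∑ x, f (G'.degree x) := by
    have hkey : f ((G.degree u : ℝ)) - f ((G.degree u : ℝ) - 1) <
        f ((G.degree w : ℝ) + 1) - f ((G.degree w : ℝ)) := by
      have h1 : G.degree u - 1 < G.degree w := by
        have := hniso u
        have := hu w (Finset.mem_univ w)
        omega
      have := gmono h1
      simp only at this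
      have hc : ((G.degree u - 1 : ℕ) : ℝ) = (G.degree u : ℝ) - 1 := by
        push_cast [Nat.cast_sub (by have := hniso u; omega : 1 ≤ G.degree u)]; ring
      rw [hc] at this
      have hc2 : ((G.degree u : ℝ) - 1) + 1 = (G.degree u : ℝ) := by ring
      rw [hc2] at this
      exact this
    have hdiff : ∑ x, f (G'.degree x) - ∑ x, f (G.degree x) =
        (f ((G.degree w : ℝ) + 1) - f (G.degree w)) + (f ((G.degree u : ℝ) - 1) - f (G.degree u)) := by
      rw [← hsum, Finset.sum_sub_distrib]
    linarith
  -- transport to Fin (card V)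
  set n := Fintype.card V
  set e : Fin n ≃ V := (Fintype.equivFin V).symm
  set G'' : SimpleGraph (Fin n) := G'.comap e.toEmbedding with hG''
  haveI : DecidableRel G''.Adj := fun x y =>
    decidable_of_iff (G'.Adj (e x) (e y)) Iff.rfl
  have hcard'' : G''.edgeFinset.card = m := by
    convert (SimpleGraph.Iso.comap e G').card_edgeFinset_eq.trans hcard'
    rfl
  have hdeg'' : ∀ i, G''.degree i = G'.degree (e i) := by
    intro i
    rw [← SimpleGraph.card_neighborSet_eq_degree, ← SimpleGraph.card_neighborSet_eq_degree]
    apply Fintype.card_congr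
    exact Equiv.subtypeEquiv e (fun y => by simp [hG'', SimpleGraph.neighborSet])
  have hle := hmax (Fin n) G'' hcard''
  have hsum'' : ∑ i, f (G''.degree i) = ∑ x, f (G'.degree x) := by
    rw [← Equiv.sum_comp e (fun x => f (G'.degree x))]
    exact Finset.sum_congr rfl (fun i _ => by rw [hdeg'' i])
  rw [hsum''] at hle
  linarith
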